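/- Let G be a graph and α a walk in G. Repeatedly pruning α results in a unique non-prunable walk: any two maximal sequences of prunes applied to α terminate in the same non-prunable walk, independent of the order in which the prunes are performed. -/

import Mathlib

/-- A graph: vertex type `V` with a symmetric adjacency relation (loops allowed). -/
structure WGraph (V : Type) where
  Adj : V → V → Prop
  symm : Symmetric Adj

variable {V W X : Type}

/-- `l` is the (nonempty) vertex sequence of a walk in `G`. -/
def IsWalk (G : WGraph V) (l : List V) : Prop :=
  l ≠ [] ∧ l.Chain' G.Adj

/-- `l` is a walk in `G` from `x` to `y`. -/
def IsWalkFrom (G : WGraph V) (x y : V) (l : List V) : Prop :=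
  l.Chain' G.Adj ∧ l.head? = some x ∧ l.getLast? = some y

/-- Concatenation of walks sharing an endpoint: follow `l`, then `m`. -/
def wconcat (l m : List V) : List V := l ++ m.tail

/-- A walk is prunable if some vertex `vᵢ` satisfies `vᵢ = vᵢ₊₂`. -/
def Prunable (l : List V) : Prop :=
  ∃ (p s : List V) (a b : V), l = p ++ a :: b :: a :: s

/-- `m` is obtained from `l` by a single prune (deleting `vᵢ, vᵢ₊₁` when `vᵢ = vᵢ₊₂`). -/
def PruneOf (l m : List V) : Prop :=
  ∃ (p s : List V) (a b : V), l = p ++ a :: b :: a :: s ∧ m = p ++ a :: s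

/-- A single prune step (in either direction) between walks of `G`. -/
def PruneStep (G : WGraph V) (l m : List V) : Prop :=
  IsWalk G l ∧ IsWalk G m ∧ (PruneOf l m ∨ PruneOf m l)

/-- Prune equivalence: the equivalence relation on walks of `G` generated by prunes. -/
def PruneEqv (G : WGraph V) : List V → List V → Prop :=
  Relation.EqvGen (PruneStep G)

/-- A spider move: two walks of `G` of the same length which agree at every index
except (at most) a single interior index. -/
def SpiderStep (G : WGraph V) (l m : List V) : Prop :=
  IsWalk G l ∧ IsWalk G m ∧ l.length = m.length ∧
    ∃ i : ℕ, 0 < i ∧ i + 1 < l.length ∧ ∀ j : ℕ, j ≠ i → l[j]? = m[j]?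

/-- Homotopy rel endpoints (`≡`): the equivalence relation on walks of `G`
generated by prunes and spider moves. -/
def HomEqv (G : WGraph V) : List V → List V → Prop :=
  Relation.EqvGen (fun l m => PruneStep G l m ∨ SpiderStep G l m)

/-- A graph morphism. -/
def IsHom (G : WGraph V) (H : WGraph W) (f : V → W) : Prop :=
  ∀ {u v : V}, G.Adj u v → H.Adj (f u) (f v)

/-- One step of a ×-homotopy between graph morphisms. -/
def HtpyStep (G : WGraph V) (H : WGraph W) (f g : V → W) : Prop :=
  IsHom G H f ∧ IsHom G H g ∧ ∀ u v, G.Adj u v → H.Adj (f u) (g v)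

/-- ×-homotopy of graph morphisms. -/
def Homotopic (G : WGraph V) (H : WGraph W) : (V → W) → (V → W) → Prop :=
  Relation.ReflTransGen (HtpyStep G H)

lemma pruneOf_cons {l m : List V} (x : V) (h : PruneOf l m) : PruneOf (x :: l) (x :: m) := by
  obtain ⟨p, s, a, b, h1, h2⟩ := h
  exact ⟨x :: p, s, a, b, by simp [h1], by simp [h2]⟩

lemma prune_aux (a b c d : V) : ∀ (p q s t : List V), p.length ≤ q.length →
    p ++ a :: b :: a :: s = q ++ c :: d :: c :: t →
    p ++ a :: s = q ++ c :: t ∨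
      ∃ e, PruneOf (p ++ a :: s) e ∧ PruneOf (q ++ c :: t) e := by
  intro p
  induction p with
  | nil =>
    intro q s t _ h
    match q with
    | [] =>
      simp only [List.nil_append, List.cons.injEq] at h ⊢
      obtain ⟨rfl, rfl, -, rfl⟩ := h
      exact Or.inl ⟨rfl, rfl⟩
    | [x] =>
      simp only [List.nil_append, List.cons_append, List.cons.injEq] at h
      obtain ⟨rfl, rfl, rfl, rfl⟩ := h
      left; rfl
    | [x, y] =>
      simp only [List.nil_append, List.cons_append, List.cons.injEq] at h
      obtain ⟨rfl, rfl, rfl, rfl⟩ := h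
      right
      exact ⟨a :: t, ⟨[], t, a, d, rfl, rfl⟩, ⟨[], t, a, b, rfl, rfl⟩⟩
    | x :: y :: z :: q' =>
      simp only [List.nil_append, List.cons_append, List.cons.injEq] at h
      obtain ⟨rfl, rfl, rfl, rfl⟩ := h
      right
      refine ⟨a :: (q' ++ c :: t), ⟨a :: q', t, c, d, by simp, by simp⟩,
        ⟨[], q' ++ c :: t, a, b, by simp, rfl⟩⟩
  | cons x p' ih =>
    intro q s t hlen h
    match q with
    | [] => simp at hlen
    | y :: q' =>
      simp only [List.cons_append, List.cons.injEq] at h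
      obtain ⟨rfl, h⟩ := h
      simp only [List.length_cons, Nat.succ_le_succ_iff] at hlen
      rcases ih q' s t hlen h with heq | ⟨e, h1, h2⟩
      · left; simp [heq]
      · right; exact ⟨x :: e, pruneOf_cons x h1, pruneOf_cons x h2⟩

lemma prune_diamond {l m n : List V} (h1 : PruneOf l m) (h2 : PruneOf l n) :
    ∃ e, Relation.ReflGen PruneOf m e ∧ Relation.ReflGen PruneOf n e := by
  obtain ⟨p, s, a, b, hl1, rfl⟩ := h1
  obtain ⟨q, t, c, d, hl2, rfl⟩ := h2
  have h : p ++ a :: b :: a :: s = q ++ c :: d :: c :: t := hl1.symm.trans hl2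
  rcases le_total p.length q.length with hle | hle
  · rcases prune_aux a b c d p q s t hle h with heq | ⟨e, he1, he2⟩
    · exact ⟨p ++ a :: s, .refl, heq ▸ .refl⟩
    · exact ⟨e, .single he1, .single he2⟩
  · rcases prune_aux c d a b q p t s hle h.symm with heq | ⟨e, he1, he2⟩
    · exact ⟨p ++ a :: s, .refl, heq ▸ .refl⟩
    · exact ⟨e, .single he2, .single he1⟩

lemma prune_exists_nf : ∀ (n : ℕ) (l : List V), l.length ≤ n →
    ∃ β, Relation.ReflTransGen PruneOf l β ∧ ¬ Prunable β := by
  intro n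
  induction n with
  | zero =>
    intro l hl
    refine ⟨l, .refl, ?_⟩
    rintro ⟨p, s, a, b, rfl⟩
    simp at hl
  | succ n ih =>
    intro l hl
    by_cases hp : Prunable l
    · obtain ⟨p, s, a, b, rfl⟩ := hp
      have hstep : PruneOf (p ++ a :: b :: a :: s) (p ++ a :: s) := ⟨p, s, a, b, rfl, rfl⟩
      obtain ⟨β, hβ, hβ2⟩ := ih (p ++ a :: s) (by simp at hl ⊢; omega)
      exact ⟨β, .head hstep hβ, hβ2⟩
    · exact ⟨l, .refl, hp⟩

lemma pruneOf_prunable {l m : List V} (h : PruneOf l m) : Prunable l := by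
  obtain ⟨p, s, a, b, h1, -⟩ := h
  exact ⟨p, s, a, b, h1⟩

lemma nf_rtg_eq {β d : List V} (hβ : ¬ Prunable β)
    (h : Relation.ReflTransGen PruneOf β d) : β = d := by
  rcases h.cases_head with rfl | ⟨c, hc, -⟩
  · rfl
  · exact absurd (pruneOf_prunable hc) hβ

/-- Repeated pruning of a walk results in a unique non-prunable walk,
independent of the order in which the prunes are performed. -/
theorem stmt0 (G : WGraph V) (α : List V) (hα : IsWalk G α) :
    ∃! β : List V, Relation.ReflTransGen PruneOf α β ∧ ¬ Prunable β := by
  obtain ⟨β, hβ1, hβ2⟩ := prune_exists_nf α.length α le_rfl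
  refine ⟨β, ⟨hβ1, hβ2⟩, ?_⟩
  rintro γ ⟨hγ1, hγ2⟩
  have cr : ∀ a b c : List V, PruneOf a b → PruneOf a c →
      ∃ d, Relation.ReflGen PruneOf b d ∧ Relation.ReflTransGen PruneOf c d := by
    intro a b c h1 h2
    obtain ⟨e, he1, he2⟩ := prune_diamond h1 h2
    exact ⟨e, he1, he2.to_reflTransGen⟩
  obtain ⟨d, hd1, hd2⟩ := Relation.church_rosser cr hγ1 hβ1
  rw [nf_rtg_eq hγ2 hd1, nf_rtg_eq hβ2 hd2]
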